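/- arXiv:1102.1643 — 2 statements merged into one kernel-verified Lean document; each statement's English description precedes it below -/
import Mathlib

section
/- Let Q* be a polynomial over the integers that is a product of r distinct irreducible polynomials R_1, ..., R_r, and for a modulus m let ρ*(m) denote the number of residues n mod m with Q*(n) ≡ 0 (mod m), and ρ_{R_h}(m) the number of residues n mod m with R_h(n) ≡ 0 (mod m). Define ρ̂_R(n_1,...,n_r) as the number of residues n modulo L = lcm(n_1·κ(n_1), ..., n_r·κ(n_r)) such that n_h exactly divides R_h(n) for each h, where κ(n) is the squarefree kernel of n. Then ρ̂_R(n_1,...,n_r) / lcm(n_1·κ(n_1),...,n_r·κ(n_r)) ≤ ρ*(n_1 ⋯ n_r) / (n_1 ⋯ n_r). -/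
open Polynomial Finset
open scoped Classical

/-- Number of roots of `P` modulo `m`. -/
noncomputable def polyRho (P : Polynomial ℤ) (m : ℕ) : ℕ :=
  ((Finset.range m).filter fun n : ℕ => (m : ℤ) ∣ P.eval (n : ℤ)).card

/-- Squarefree kernel of `n`. -/
def kappa (n : ℕ) : ℕ := ∏ p ∈ n.primeFactors, p

/-- `a` exactly divides `b` : `a ∣ b` and `gcd(a, b/a) = 1`. -/
def exactDiv (a : ℕ) (b : ℤ) : Prop := (a : ℤ) ∣ b ∧ Int.gcd (a : ℤ) (b / (a : ℤ)) = 1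

lemma prime_dvd_kappa {a p : ℕ} (ha : 0 < a) (hp : p.Prime) (hpa : p ∣ a) : p ∣ kappa a :=
  Finset.dvd_prod_of_mem _ (Nat.mem_primeFactors.mpr ⟨hp, hpa, ha.ne'⟩)

lemma gcd_one_of_kappa {a : ℕ} (ha : 0 < a) {x y : ℤ}
    (hxy : ((kappa a : ℕ) : ℤ) ∣ x - y) (hx : Int.gcd (a : ℤ) x = 1) :
    Int.gcd (a : ℤ) y = 1 := by
  by_contra hg
  set g := Int.gcd (a : ℤ) y with hgdef
  have hg0 : g ≠ 0 := by
    intro h0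
    have := Int.gcd_eq_zero_iff.mp h0
    exact_mod_cast ha.ne' (by exact_mod_cast this.1)
  have hg2 : 2 ≤ g := by omega
  set p := g.minFac with hpdef
  have hp : p.Prime := Nat.minFac_prime (by omega)
  have hpg : p ∣ g := Nat.minFac_dvd g
  have hpa : p ∣ a := by
    have h1 : (g : ℤ) ∣ (a : ℤ) := Int.gcd_dvd_left _ _
    exact_mod_cast (dvd_trans (Int.natCast_dvd_natCast.mpr hpg) h1)
  have hpy : (p : ℤ) ∣ y := dvd_trans (Int.natCast_dvd_natCast.mpr hpg) (Int.gcd_dvd_right _ _)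
  have hpk : (p : ℤ) ∣ x - y :=
    dvd_trans (Int.natCast_dvd_natCast.mpr (prime_dvd_kappa ha hp hpa)) hxy
  have hpx : (p : ℤ) ∣ x := by
    have := dvd_add hpk hpy
    simpa using this
  have : (p : ℤ) ∣ (Int.gcd (a : ℤ) x : ℤ) :=
    Int.dvd_coe_gcd (Int.natCast_dvd_natCast.mpr hpa) hpx
  rw [hx] at this
  exact hp.one_lt.ne' (by exact_mod_cast Int.eq_one_of_dvd_one (by positivity) this)

lemma exactDiv_of_dvd_sub {a : ℕ} (ha : 0 < a) {b b' : ℤ}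
    (h : ((a * kappa a : ℕ) : ℤ) ∣ b - b') (hb : exactDiv a b) : exactDiv a b' := by
  obtain ⟨hd, hg⟩ := hb
  have ha' : (a : ℤ) ≠ 0 := by exact_mod_cast ha.ne'
  have hak : (a : ℤ) ∣ ((a * kappa a : ℕ) : ℤ) := by
    push_cast; exact Dvd.intro _ rfl
  have hd' : (a : ℤ) ∣ b' := by
    have : (a : ℤ) ∣ b - b' := dvd_trans hak h
    have := dvd_sub hd this
    simpa using this
  refine ⟨hd', ?_⟩
  obtain ⟨c, rfl⟩ := hd
  obtain ⟨c', rfl⟩ := hd'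
  rw [Int.mul_ediv_cancel_left _ ha'] at hg ⊢
  obtain ⟨t, ht⟩ := h
  push_cast at ht
  have hcc : c - c' = (kappa a : ℤ) * t := by
    have : (a : ℤ) * (c - c') = (a : ℤ) * ((kappa a : ℤ) * t) := by ring_nf; ring_nf at ht; linarith
    exact mul_left_cancel₀ ha' this
  exact gcd_one_of_kappa ha ⟨t, hcc⟩ hg

lemma exactDiv_congr {a : ℕ} (ha : 0 < a) {b b' : ℤ}
    (h : ((a * kappa a : ℕ) : ℤ) ∣ b - b') : exactDiv a b ↔ exactDiv a b' :=
  ⟨exactDiv_of_dvd_sub ha h, exactDiv_of_dvd_sub ha (by simpa using h.neg_right)⟩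

lemma periodic_filter_card {p : ℕ → Prop} [DecidablePred p] {d : ℕ}
    (hp : Function.Periodic p d) (k : ℕ) :
    ((Finset.range (d * k)).filter p).card = k * ((Finset.range d).filter p).card := by
  induction k with
  | zero => simp
  | succ k ih =>
    have hsplit : Finset.range (d * (k + 1)) = Finset.range (d * k) ∪ Finset.Ico (d * k) (d * k + d) := by
      rw [show d * (k + 1) = d * k + d by ring, Finset.range_eq_Ico, Finset.range_eq_Ico]
      exact (Finset.Ico_union_Ico_eq_Ico (Nat.zero_le _) (Nat.le_add_right _ _)).symm
    rw [hsplit, Finset.filter_union, Finset.card_union_of_disjoint, ih,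
      Nat.filter_Ico_card_eq_of_periodic _ _ _ hp, Nat.count_eq_card_filter_range]
    · ring
    · exact (Finset.disjoint_filter_filter
        (by rw [Finset.range_eq_Ico]; exact Finset.Ico_disjoint_Ico_consecutive 0 (d*k) (d*k+d)))

theorem stmt0 (r : ℕ) (hr : 0 < r) (R : Fin r → Polynomial ℤ)
    (hirr : ∀ h, Irreducible (R h)) (hdist : ∀ i j, i ≠ j → R i ≠ R j)
    (n : Fin r → ℕ) (hn : ∀ h, 0 < n h) :
    ((((Finset.range (Finset.univ.lcm fun h => n h * kappa (n h))).filter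
          fun m : ℕ => ∀ h, exactDiv (n h) ((R h).eval (m : ℤ))).card : ℝ) /
        ((Finset.univ.lcm fun h => n h * kappa (n h) : ℕ) : ℝ)) ≤
      (polyRho (∏ h, R h) (∏ h, n h) : ℝ) / ((∏ h, n h : ℕ) : ℝ) := by
  set L : ℕ := Finset.univ.lcm fun h => n h * kappa (n h) with hLdef
  set N : ℕ := ∏ h, n h with hNdef
  have hkpos : ∀ h, 0 < kappa (n h) := by
    intro h
    apply Finset.prod_pos
    intro p hp
    exact (Nat.prime_of_mem_primeFactors hp).pos
  have hdvdL : ∀ h, n h * kappa (n h) ∣ L := fun h => Finset.dvd_lcm (Finset.mem_univ h)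
  have hLpos : 0 < L := by
    rcases Nat.eq_zero_or_pos L with h0 | h
    · exfalso
      rw [hLdef, Finset.lcm_eq_zero_iff] at h0
      obtain ⟨h, _, hh⟩ := h0
      exact (Nat.mul_pos (hn h) (hkpos h)).ne' (by simpa using hh.symm)
    · exact h
  have hNpos : 0 < N := Finset.prod_pos fun h _ => hn h
  -- periodicity of the exactDiv predicate with period L
  have hperP : Function.Periodic (fun m : ℕ => ∀ h, exactDiv (n h) ((R h).eval (m : ℤ))) L := by
    intro x
    simp only [eq_iff_iff]
    constructor <;> intro hx h <;>
    · have hdvd : ((n h * kappa (n h) : ℕ) : ℤ) ∣ (R h).eval ((x + L : ℕ) : ℤ) - (R h).eval (x : ℤ) := by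
        have h1 : ((x + L : ℕ) : ℤ) - (x : ℤ) ∣ (R h).eval ((x + L : ℕ) : ℤ) - (R h).eval (x : ℤ) :=
          Polynomial.sub_dvd_eval_sub _ _ _
        have h2 : ((x + L : ℕ) : ℤ) - (x : ℤ) = (L : ℤ) := by push_cast; ring
        rw [h2] at h1
        exact dvd_trans (Int.natCast_dvd_natCast.mpr (hdvdL h)) h1
      first
      | exact exactDiv_of_dvd_sub (hn h) hdvd (hx h)
      | exact exactDiv_of_dvd_sub (hn h) (by simpa using hdvd.neg_right) (hx h)
  -- periodicity of root predicate with period N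
  have hperQ : Function.Periodic (fun m : ℕ => (N : ℤ) ∣ (∏ h, R h).eval (m : ℤ)) N := by
    intro x
    simp only [eq_iff_iff]
    have hdvd : (N : ℤ) ∣ (∏ h, R h).eval ((x + N : ℕ) : ℤ) - (∏ h, R h).eval (x : ℤ) := by
      have h1 := Polynomial.sub_dvd_eval_sub ((x + N : ℕ) : ℤ) (x : ℤ) (∏ h, R h)
      have h2 : ((x + N : ℕ) : ℤ) - (x : ℤ) = (N : ℤ) := by push_cast; ring
      rwa [h2] at h1
    constructor <;> intro hx
    · have := dvd_sub hx hdvd; simpa using this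
    · have := dvd_add hdvd hx; simpa using this
  -- implication: exactDiv everywhere implies N divides Q(m)
  have himp : ∀ m : ℕ, (∀ h, exactDiv (n h) ((R h).eval (m : ℤ))) →
      (N : ℤ) ∣ (∏ h, R h).eval (m : ℤ) := by
    intro m hm
    rw [Polynomial.eval_prod]
    have : ((N : ℕ) : ℤ) = ∏ h, ((n h : ℕ) : ℤ) := by rw [hNdef]; push_cast; rfl
    rw [this]
    exact Finset.prod_dvd_prod_of_dvd _ _ fun h _ => (hm h).1
  -- counting
  set A : ℕ := ((Finset.range L).filter fun m : ℕ => ∀ h, exactDiv (n h) ((R h).eval (m : ℤ))).card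
  have key : A * N ≤ polyRho (∏ h, R h) N * L := by
    have h1 : ((Finset.range (L * N)).filter
        fun m : ℕ => ∀ h, exactDiv (n h) ((R h).eval (m : ℤ))).card = N * A :=
      periodic_filter_card hperP N
    have h2 : ((Finset.range (N * L)).filter
        fun m : ℕ => (N : ℤ) ∣ (∏ h, R h).eval (m : ℤ)).card = L * polyRho (∏ h, R h) N :=
      periodic_filter_card hperQ L
    have hsub : ((Finset.range (L * N)).filter
        fun m : ℕ => ∀ h, exactDiv (n h) ((R h).eval (m : ℤ))) ⊆
        ((Finset.range (N * L)).filter fun m : ℕ => (N : ℤ) ∣ (∏ h, R h).eval (m : ℤ)) := by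
      intro m hm
      rw [Finset.mem_filter] at hm ⊢
      exact ⟨by rw [Nat.mul_comm]; exact hm.1, himp m hm.2⟩
    have := Finset.card_le_card hsub
    rw [h1, h2] at this
    calc A * N = N * A := Nat.mul_comm _ _
      _ ≤ L * polyRho (∏ h, R h) N := this
      _ = polyRho (∏ h, R h) N * L := Nat.mul_comm _ _
  rw [div_le_div_iff₀ (by exact_mod_cast hLpos) (by exact_mod_cast hNpos)]
  exact_mod_cast key
end

section
/- Let R_h and R_i be two distinct monic irreducible polynomials in ℤ[X] dividing a separable polynomial Q* with discriminant D*. Suppose a_h, a_i are positive integers with gcd(a_h, D*) = gcd(a_i, D*) = 1, and suppose there exists an integer n such that a_h | R_h(n) and a_i | R_i(n). Then gcd(a_h, a_i) = 1. -/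
open Polynomial

/-- Sylvester matrix of `P` and `Q` (rows are shifted coefficient vectors:
`Q.natDegree` rows of coefficients of `P` and `P.natDegree` rows of
coefficients of `Q`). -/
noncomputable def sylvesterMatrix (P Q : Polynomial ℤ) :
    Matrix (Fin (Q.natDegree + P.natDegree)) (Fin (Q.natDegree + P.natDegree)) ℤ :=
  Matrix.of fun i j =>
    if (i : ℕ) < Q.natDegree then
      if (i : ℕ) ≤ (j : ℕ) then P.coeff ((j : ℕ) - (i : ℕ)) else 0
    else
      if (i : ℕ) - Q.natDegree ≤ (j : ℕ) then
        Q.coeff ((j : ℕ) - ((i : ℕ) - Q.natDegree)) else 0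

/-- The resultant of two integer polynomials, as the determinant of their
Sylvester matrix. -/
noncomputable def intResultant (P Q : Polynomial ℤ) : ℤ :=
  (sylvesterMatrix P Q).det

/-- The discriminant (up to sign and a power of the leading coefficient)
of an integer polynomial: the resultant of `P` and its derivative. -/
noncomputable def intDiscriminant (P : Polynomial ℤ) : ℤ :=
  intResultant P (derivative P)

lemma row_sum {A : Type*} [CommRing A] (f : ℤ →+* A) (R : Polynomial ℤ) (N i0 : ℕ)
    (h : R.natDegree + i0 < N) (x : A) :
    ∑ j : Fin N, (if i0 ≤ (j : ℕ) then f (R.coeff ((j : ℕ) - i0)) else 0) * x ^ (j : ℕ)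
      = R.eval₂ f x * x ^ i0 := by
  rw [Fin.sum_univ_eq_sum_range (fun j => (if i0 ≤ j then f (R.coeff (j - i0)) else 0) * x ^ j) N]
  have hi0N : i0 ≤ N := by omega
  rw [← Finset.sum_range_add_sum_Ico _ hi0N]
  have h1 : ∑ j ∈ Finset.range i0, (if i0 ≤ j then f (R.coeff (j - i0)) else 0) * x ^ j = 0 := by
    apply Finset.sum_eq_zero
    intro j hj
    rw [Finset.mem_range] at hj
    rw [if_neg (by omega), zero_mul]
  rw [h1, zero_add, Finset.sum_Ico_eq_sum_range]
  have h2 : ∀ k ∈ Finset.range (N - i0),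
      (if i0 ≤ i0 + k then f (R.coeff (i0 + k - i0)) else 0) * x ^ (i0 + k)
        = (f (R.coeff k) * x ^ k) * x ^ i0 := by
    intro k _
    rw [if_pos (Nat.le_add_right _ _), Nat.add_sub_cancel_left, pow_add]
    ring
  rw [Finset.sum_congr rfl h2, ← Finset.sum_mul,
    ← Polynomial.eval₂_eq_sum_range' f (by omega) x]

lemma disc_dvd (p : ℕ) [hp : Fact p.Prime] (Q : Polynomial ℤ) (hQ1 : 1 ≤ Q.natDegree) (n : ℤ)
    (h0 : (p : ℤ) ∣ Q.eval n) (h1 : (p : ℤ) ∣ (derivative Q).eval n) :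
    (p : ℤ) ∣ intDiscriminant Q := by
  rw [← ZMod.intCast_zmod_eq_zero_iff_dvd]
  set f : ℤ →+* ZMod p := Int.castRingHom (ZMod p) with hf
  have hdet : ((intDiscriminant Q : ℤ) : ZMod p)
      = ((sylvesterMatrix Q (derivative Q)).map f).det := by
    rw [intDiscriminant, intResultant]
    exact (RingHom.map_det f _).trans (by rw [RingHom.mapMatrix_apply])
  rw [hdet, ← Matrix.exists_mulVec_eq_zero_iff]
  have hN : 0 < (derivative Q).natDegree + Q.natDegree := by omega
  refine ⟨fun j => (n : ZMod p) ^ (j : ℕ), ?_, ?_⟩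
  · intro hv
    have := congrFun hv ⟨0, hN⟩
    simp at this
  · funext i
    show ∑ j, ((sylvesterMatrix Q (derivative Q)).map f) i j * (n : ZMod p) ^ (j : ℕ) = 0
    have hx : (n : ZMod p) = f n := rfl
    by_cases hi : (i : ℕ) < (derivative Q).natDegree
    · have : ∀ j : Fin ((derivative Q).natDegree + Q.natDegree),
          ((sylvesterMatrix Q (derivative Q)).map f) i j
            = if (i : ℕ) ≤ (j : ℕ) then f (Q.coeff ((j : ℕ) - (i : ℕ))) else 0 := by
        intro j
        simp only [Matrix.map_apply, sylvesterMatrix, Matrix.of_apply, if_pos hi, apply_ite f,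
          map_zero]
      rw [Finset.sum_congr rfl (fun j _ => by rw [this j])]
      rw [hx, row_sum f Q _ _ (by omega), Polynomial.eval₂_at_apply]
      have : f (Q.eval n) = 0 := by
        rw [hf]
        simpa [ZMod.intCast_zmod_eq_zero_iff_dvd] using h0
      rw [this, zero_mul]
    · have : ∀ j : Fin ((derivative Q).natDegree + Q.natDegree),
          ((sylvesterMatrix Q (derivative Q)).map f) i j
            = if (i : ℕ) - (derivative Q).natDegree ≤ (j : ℕ) then
                f ((derivative Q).coeff ((j : ℕ) - ((i : ℕ) - (derivative Q).natDegree))) else 0 := by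
        intro j
        simp only [Matrix.map_apply, sylvesterMatrix, Matrix.of_apply, if_neg hi, apply_ite f,
          map_zero]
      rw [Finset.sum_congr rfl (fun j _ => by rw [this j])]
      have hbound : (derivative Q).natDegree + ((i : ℕ) - (derivative Q).natDegree)
          < (derivative Q).natDegree + Q.natDegree := by
        have := i.isLt
        omega
      rw [hx, row_sum f (derivative Q) _ _ hbound, Polynomial.eval₂_at_apply]
      have : f ((derivative Q).eval n) = 0 := by
        rw [hf]
        simpa [ZMod.intCast_zmod_eq_zero_iff_dvd] using h1
      rw [this, zero_mul]

theorem stmt6 (Q Rh Ri : Polynomial ℤ) (hQsf : Squarefree Q)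
    (hmh : Rh.Monic) (hmi : Ri.Monic)
    (hirrh : Irreducible Rh) (hirri : Irreducible Ri) (hne : Rh ≠ Ri)
    (hdvdh : Rh ∣ Q) (hdvdi : Ri ∣ Q)
    (ah ai : ℕ) (hah : 0 < ah) (hai : 0 < ai)
    (hcoph : Nat.Coprime ah (intDiscriminant Q).natAbs)
    (hcopi : Nat.Coprime ai (intDiscriminant Q).natAbs)
    (n : ℤ) (hh : (ah : ℤ) ∣ Rh.eval n) (hi : (ai : ℤ) ∣ Ri.eval n) :
    Nat.Coprime ah ai := by
  have hQ0 : Q ≠ 0 := hQsf.ne_zero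
  have hpri : Prime Ri := UniqueFactorizationMonoid.irreducible_iff_prime.mp hirri
  have hRine : ¬ Ri ∣ Rh := by
    intro hdvd
    exact hne (Polynomial.eq_of_monic_of_associated hmh hmi
      (hirri.associated_of_dvd hirrh hdvd).symm)
  obtain ⟨T, hT⟩ := hdvdh
  have hRiT : Ri ∣ T := (hpri.dvd_or_dvd (hT ▸ hdvdi)).resolve_left hRine
  obtain ⟨S, hS⟩ := hRiT
  have hQ : Q = Rh * (Ri * S) := by rw [hT, hS]
  have hdegRh : 1 ≤ Rh.natDegree := by
    rcases Nat.eq_zero_or_pos Rh.natDegree with h | h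
    · exact absurd (hmh.natDegree_eq_zero.mp h ▸ isUnit_one) hirrh.not_isUnit
    · exact h
  have hdegQ : 1 ≤ Q.natDegree := le_trans hdegRh (Polynomial.natDegree_le_of_dvd ⟨T, hT⟩ hQ0)
  by_contra hcon
  obtain ⟨p, hp, hpd⟩ := Nat.exists_prime_and_dvd hcon
  have hpah : p ∣ ah := hpd.trans (Nat.gcd_dvd_left _ _)
  have hpai : p ∣ ai := hpd.trans (Nat.gcd_dvd_right _ _)
  have hpRh : (p : ℤ) ∣ Rh.eval n := dvd_trans (Int.natCast_dvd_natCast.mpr hpah) hh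
  have hpRi : (p : ℤ) ∣ Ri.eval n := dvd_trans (Int.natCast_dvd_natCast.mpr hpai) hi
  have h0 : (p : ℤ) ∣ Q.eval n := by
    rw [hQ, eval_mul]
    exact dvd_mul_of_dvd_left hpRh _
  have h1 : (p : ℤ) ∣ (derivative Q).eval n := by
    rw [hQ, derivative_mul, eval_add, eval_mul, eval_mul, eval_mul]
    exact dvd_add (dvd_mul_of_dvd_right (dvd_mul_of_dvd_left hpRi _) _)
      (dvd_mul_of_dvd_left hpRh _)
  haveI : Fact p.Prime := ⟨hp⟩
  have hdisc := disc_dvd p Q hdegQ n h0 h1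
  have hpD : p ∣ (intDiscriminant Q).natAbs := by
    have := Int.natAbs_dvd_natAbs.mpr hdisc
    simpa using this
  have hone : p ∣ 1 := hcoph ▸ Nat.dvd_gcd hpah hpD
  exact hp.one_lt.ne' (Nat.dvd_one.mp hone)
end
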